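/- arXiv:2205.01258 — 2 statements merged into one kernel-verified Lean document; each statement's English description precedes it below -/
import Mathlib

section
/- Let X be a finite set with |X| ≥ 2 and let d be a metric on X. Then there exist a finite action set W with |W| ≥ 2, a loss function ℓ : W → X → ℝ with ℓ w x ≥ 0 that is non-trivial (there is no single action w* ∈ W with ℓ w* x ≤ ℓ w x for all w ∈ W and all x ∈ X), and a d-private channel M : X → Y → ℝ (for some finite nonempty Y) such that M is universally ℓ-optimal within the d-privacy type. -/
open Finset

/-- A channel from `X` to `Y`: nonnegative entries and each row sums to 1. -/
def IsChannel {X Y : Type} [Fintype Y] (M : X → Y → ℝ) : Prop :=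
  (∀ x y, 0 ≤ M x y) ∧ ∀ x, ∑ y, M x y = 1

/-- The `d`-privacy constraints on a channel. -/
def IsPrivate {X Y : Type} (d : X → X → ℝ) (M : X → Y → ℝ) : Prop :=
  ∀ x x' y, M x y ≤ Real.exp (d x x') * M x' y

/-- `d` is a metric on `X`. -/
def IsMetric {X : Type} (d : X → X → ℝ) : Prop :=
  (∀ x, d x x = 0) ∧ (∀ x x' : X, x ≠ x' → 0 < d x x') ∧
    (∀ x x', d x x' = d x' x) ∧ ∀ x y z, d x z ≤ d x y + d y z

/-- A prior on `X`. -/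
def IsPrior {X : Type} [Fintype X] (π : X → ℝ) : Prop :=
  (∀ x, 0 ≤ π x) ∧ ∑ x, π x = 1

/-- Posterior expected loss `U_ℓ[π⟩M]`. -/
noncomputable def postLoss {X Y W : Type} [Fintype X] [Fintype Y] [Fintype W] [Nonempty W]
    (π : X → ℝ) (M : X → Y → ℝ) (ℓ : W → X → ℝ) : ℝ :=
  ∑ y, Finset.univ.inf' Finset.univ_nonempty fun w => ∑ x, π x * M x y * ℓ w x

/-- Universal `ℓ`-optimality within the `d`-privacy type. -/
def UnivOptimal {X W Y : Type} [Fintype X] [Fintype W] [Nonempty W] [Fintype Y]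
    (d : X → X → ℝ) (M : X → Y → ℝ) (ℓ : W → X → ℝ) : Prop :=
  ∀ (Y' : Type) [Fintype Y'] [Nonempty Y'] (M' : X → Y' → ℝ),
    IsChannel M' → IsPrivate d M' →
      ∀ π : X → ℝ, IsPrior π → postLoss π M ℓ ≤ postLoss π M' ℓ

/-- Helper: sum of `π x * N x y * indicator (x = c)` equals `π c * N c y`. -/
lemma sum_ind {X : Type} [Fintype X] [DecidableEq X] (π : X → ℝ) (g : X → ℝ) (c : X) :
    ∑ x, π x * g x * (if x = c then (1:ℝ) else 0) = π c * g c := by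
  rw [Finset.sum_eq_single c]
  · simp
  · intro x _ hx; simp [hx]
  · intro h; exact absurd (Finset.mem_univ c) h

lemma fin_two_cases (w : Fin 2) : w = 0 ∨ w = 1 := by
  fin_cases w
  · exact Or.inl rfl
  · exact Or.inr rfl

/-- Universal optimality existence: every privacy type on at least two inputs
contains a mechanism universally `ℓ`-optimal for some non-trivial
nonnegative loss function `ℓ`. -/
theorem exists_nontrivial_universally_optimal
    {X : Type} [Fintype X] (hcard : 2 ≤ Fintype.card X)
    (d : X → X → ℝ) (hd : IsMetric d) :
    ∃ (k : ℕ) (ℓ : Fin (k + 2) → X → ℝ)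
      (m : ℕ) (M : X → Fin (m + 1) → ℝ),
      (∀ w x, 0 ≤ ℓ w x) ∧
      (¬ ∃ wstar : Fin (k + 2), ∀ (w : Fin (k + 2)) (x : X), ℓ wstar x ≤ ℓ w x) ∧
      IsChannel M ∧ IsPrivate d M ∧ UnivOptimal d M ℓ := by
  classical
  obtain ⟨hd0, hdpos, hdsymm, -⟩ := hd
  obtain ⟨a0, b0, hab0⟩ := Fintype.exists_pair_of_one_lt_card (α := X) (by omega)
  obtain ⟨q, hqmem, hqmin⟩ := Finset.exists_min_image
    (Finset.univ.filter fun q : X × X => q.1 ≠ q.2) (fun q => d q.1 q.2)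
    ⟨(a0, b0), by simp [hab0]⟩
  obtain ⟨a, b⟩ := q
  have hab : a ≠ b := by simpa using (Finset.mem_filter.mp hqmem).2
  have hba : b ≠ a := hab.symm
  set D := d a b with hD
  have hDpos : 0 < D := hdpos _ _ hab
  have hmin : ∀ x x' : X, x ≠ x' → D ≤ d x x' := by
    intro x x' h
    exact hqmin (x, x') (by simp [h])
  set α : ℝ := Real.exp (-D) with hα
  have hα0 : 0 < α := Real.exp_pos _
  have hα1 : α < 1 := by
    rw [hα, Real.exp_lt_one_iff]; linarith
  have h1α : (0:ℝ) < 1 + α := by linarith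
  have hαD : α * Real.exp D = 1 := by
    rw [hα, ← Real.exp_add]; simp
  -- the channel row probability of output 0
  set p : X → ℝ := fun x => if x = a then 1/(1+α) else if x = b then α/(1+α) else 1/2
    with hp
  have hpa : p a = 1/(1+α) := by simp [hp]
  have hpb : p b = α/(1+α) := by simp [hp, hba]
  have hplo : ∀ x, α/(1+α) ≤ p x := by
    intro x
    simp only [hp]
    split_ifs with h1 h2
    · rw [div_le_div_iff₀ h1α h1α]; nlinarith
    · exact le_rfl
    · rw [div_le_div_iff₀ h1α (by norm_num : (0:ℝ) < 2)]; nlinarith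
  have hphi : ∀ x, p x ≤ 1/(1+α) := by
    intro x
    simp only [hp]
    split_ifs with h1 h2
    · exact le_rfl
    · rw [div_le_div_iff₀ h1α h1α]; nlinarith
    · rw [div_le_div_iff₀ (by norm_num : (0:ℝ) < 2) h1α]; nlinarith
  -- the channel
  set M : X → Fin (1+1) → ℝ := fun x y => if y = 0 then p x else 1 - p x with hM
  have hMlo : ∀ x y, α/(1+α) ≤ M x y := by
    intro x y
    simp only [hM]
    split_ifs
    · exact hplo x
    · have h' : p x * (1+α) ≤ 1 := (le_div_iff₀ h1α).mp (hphi x)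
      rw [div_le_iff₀ h1α]
      nlinarith
  have hMhi : ∀ x y, M x y ≤ 1/(1+α) := by
    intro x y
    simp only [hM]
    split_ifs
    · exact hphi x
    · have h' : α ≤ p x * (1+α) := (div_le_iff₀ h1α).mp (hplo x)
      rw [le_div_iff₀ h1α]
      nlinarith
  -- the loss
  set L : Fin (0+2) → X → ℝ :=
    fun w x => if w = 0 then (if x = a then 1 else 0) else (if x = b then 1 else 0) with hL
  refine ⟨0, L, 1, M, ?_, ?_, ?_, ?_, ?_⟩
  · -- nonneg loss
    intro w x
    simp only [hL]
    split_ifs <;> norm_num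
  · -- nontrivial
    rintro ⟨w, hw⟩
    have hw2 : w = 0 ∨ w = 1 := fin_two_cases w
    rcases hw2 with rfl | rfl
    · have := hw 1 a
      simp [hL, hab] at this
      linarith
    · have := hw 0 b
      simp [hL, hba] at this
      linarith
  · -- channel
    constructor
    · intro x y
      have h1 := hMlo x y
      have h2 : (0:ℝ) < α/(1+α) := div_pos hα0 h1α
      linarith
    · intro x
      rw [Fin.sum_univ_two]
      simp only [hM]
      norm_num
  · -- private
    intro x x' y
    by_cases hxx : x = x'
    · subst hxx
      rw [hd0 x, Real.exp_zero, one_mul]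
    · have h1 : M x y ≤ 1/(1+α) := hMhi x y
      have h2 : α/(1+α) ≤ M x' y := hMlo x' y
      have h3 : Real.exp D ≤ Real.exp (d x x') := Real.exp_le_exp.mpr (hmin x x' hxx)
      calc M x y ≤ 1/(1+α) := h1
        _ = Real.exp D * (α/(1+α)) := by
            field_simp
            nlinarith [hαD]
        _ ≤ Real.exp (d x x') * (α/(1+α)) :=
            mul_le_mul_of_nonneg_right h3 (le_of_lt (div_pos hα0 h1α))
        _ ≤ Real.exp (d x x') * M x' y :=
            mul_le_mul_of_nonneg_left h2 (le_of_lt (Real.exp_pos _))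
  · -- universal optimality
    intro Y' _ _ M' hM' hpriv π hπ
    unfold postLoss
    have hπa : 0 ≤ π a := hπ.1 a
    have hπb : 0 ≤ π b := hπ.1 b
    have hα2 : (0:ℝ) < 1 - α^2 := by nlinarith
    set c0 : ℝ := min (π a) (α * π b) with hc0
    set c1 : ℝ := min (α * π a) (π b) with hc1
    -- evaluating the expected losses
    have eL0 : ∀ {Y₀ : Type} [Fintype Y₀] (N : X → Y₀ → ℝ) (y : Y₀),
        (∑ x, π x * N x y * L 0 x) = π a * N a y := by
      intro Y₀ _ N y
      rw [← sum_ind π (fun x => N x y) a]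
      apply Finset.sum_congr rfl
      intro x _
      simp [hL]
    have eL1 : ∀ {Y₀ : Type} [Fintype Y₀] (N : X → Y₀ → ℝ) (y : Y₀),
        (∑ x, π x * N x y * L 1 x) = π b * N b y := by
      intro Y₀ _ N y
      rw [← sum_ind π (fun x => N x y) b]
      apply Finset.sum_congr rfl
      intro x _
      simp [hL]
    -- upper bound for the mechanism M
    have key : (∑ y : Fin (1+1), Finset.univ.inf' Finset.univ_nonempty
        fun w => ∑ x, π x * M x y * L w x) ≤ (c0 + c1) / (1+α) := by
      rw [Fin.sum_univ_two]
      have t0 : (Finset.univ.inf' Finset.univ_nonempty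
          fun w => ∑ x, π x * M x (0 : Fin (1+1)) * L w x) ≤ c0 / (1+α) := by
        rcases le_total (π a) (α * π b) with h | h
        · rw [hc0, min_eq_left h]
          calc (Finset.univ.inf' Finset.univ_nonempty
              fun w => ∑ x, π x * M x (0 : Fin (1+1)) * L w x)
              ≤ ∑ x, π x * M x (0 : Fin (1+1)) * L 0 x :=
                Finset.inf'_le _ (Finset.mem_univ 0)
            _ = π a * M a 0 := eL0 M 0
            _ = π a / (1+α) := by
                simp only [hM, if_pos rfl, hpa]; ring
        · rw [hc0, min_eq_right h]
          calc (Finset.univ.inf' Finset.univ_nonempty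
              fun w => ∑ x, π x * M x (0 : Fin (1+1)) * L w x)
              ≤ ∑ x, π x * M x (0 : Fin (1+1)) * L 1 x :=
                Finset.inf'_le _ (Finset.mem_univ 1)
            _ = π b * M b 0 := eL1 M 0
            _ = α * π b / (1+α) := by
                simp only [hM, if_pos rfl, hpb]; ring
      have t1 : (Finset.univ.inf' Finset.univ_nonempty
          fun w => ∑ x, π x * M x (1 : Fin (1+1)) * L w x) ≤ c1 / (1+α) := by
        have hM1a : M a 1 = α / (1+α) := by
          simp only [hM]
          rw [if_neg (by decide), hpa]
          field_simp
          ring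
        have hM1b : M b 1 = 1 / (1+α) := by
          simp only [hM]
          rw [if_neg (by decide), hpb]
          field_simp
          ring
        rcases le_total (α * π a) (π b) with h | h
        · rw [hc1, min_eq_left h]
          calc (Finset.univ.inf' Finset.univ_nonempty
              fun w => ∑ x, π x * M x (1 : Fin (1+1)) * L w x)
              ≤ ∑ x, π x * M x (1 : Fin (1+1)) * L 0 x :=
                Finset.inf'_le _ (Finset.mem_univ 0)
            _ = π a * M a 1 := eL0 M 1
            _ = α * π a / (1+α) := by rw [hM1a]; ring
        · rw [hc1, min_eq_right h]
          calc (Finset.univ.inf' Finset.univ_nonempty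
              fun w => ∑ x, π x * M x (1 : Fin (1+1)) * L w x)
              ≤ ∑ x, π x * M x (1 : Fin (1+1)) * L 1 x :=
                Finset.inf'_le _ (Finset.mem_univ 1)
            _ = π b * M b 1 := eL1 M 1
            _ = π b / (1+α) := by rw [hM1b]; ring
      calc _ ≤ c0 / (1+α) + c1 / (1+α) := add_le_add t0 t1
        _ = (c0 + c1) / (1+α) := (add_div c0 c1 (1+α)).symm
    refine le_trans key ?_
    -- lower bound for the competitor M'
    set u : Y' → ℝ := fun y => M' a y with hu
    set v : Y' → ℝ := fun y => M' b y with hv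
    have huv : ∀ y, α * v y ≤ u y := by
      intro y
      have h := hpriv b a y
      rw [hdsymm b a, ← hD] at h
      calc α * v y ≤ α * (Real.exp D * u y) :=
            mul_le_mul_of_nonneg_left h (le_of_lt hα0)
        _ = (α * Real.exp D) * u y := by ring
        _ = u y := by rw [hαD, one_mul]
    have hvu : ∀ y, α * u y ≤ v y := by
      intro y
      have h := hpriv a b y
      rw [← hD] at h
      calc α * u y ≤ α * (Real.exp D * v y) :=
            mul_le_mul_of_nonneg_left h (le_of_lt hα0)
        _ = (α * Real.exp D) * v y := by ring
        _ = v y := by rw [hαD, one_mul]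
    have hterm' : ∀ y : Y',
        (c0 * (u y - α * v y) + c1 * (v y - α * u y)) / (1 - α^2)
          ≤ Finset.univ.inf' Finset.univ_nonempty fun w => ∑ x, π x * M' x y * L w x := by
      intro y
      apply Finset.le_inf'
      intro w _
      have hsy : 0 ≤ u y - α * v y := by linarith [huv y]
      have hty : 0 ≤ v y - α * u y := by linarith [hvu y]
      rw [div_le_iff₀ hα2]
      rcases fin_two_cases w with rfl | rfl
      · rw [eL0 M' y]
        have h1 : c0 * (u y - α * v y) ≤ π a * (u y - α * v y) :=
          mul_le_mul_of_nonneg_right (min_le_left _ _) hsy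
        have h2 : c1 * (v y - α * u y) ≤ (α * π a) * (v y - α * u y) :=
          mul_le_mul_of_nonneg_right (min_le_left _ _) hty
        nlinarith
      · rw [eL1 M' y]
        have h1 : c0 * (u y - α * v y) ≤ (α * π b) * (u y - α * v y) :=
          mul_le_mul_of_nonneg_right (min_le_right _ _) hsy
        have h2 : c1 * (v y - α * u y) ≤ π b * (v y - α * u y) :=
          mul_le_mul_of_nonneg_right (min_le_right _ _) hty
        nlinarith
    have hsumu : ∑ y, u y = 1 := hM'.2 a
    have hsumv : ∑ y, v y = 1 := hM'.2 b
    have hsum' : ∑ y, (c0 * (u y - α * v y) + c1 * (v y - α * u y)) / (1 - α^2)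
        = (c0 + c1) / (1 + α) := by
      rw [← Finset.sum_div, Finset.sum_add_distrib, ← Finset.mul_sum, ← Finset.mul_sum,
        Finset.sum_sub_distrib, Finset.sum_sub_distrib, ← Finset.mul_sum, ← Finset.mul_sum,
        hsumu, hsumv]
      rw [div_eq_div_iff (ne_of_gt hα2) (ne_of_gt h1α)]
      ring
    calc (c0 + c1) / (1 + α)
        = ∑ y, (c0 * (u y - α * v y) + c1 * (v y - α * u y)) / (1 - α^2) := hsum'.symm
      _ ≤ ∑ y, Finset.univ.inf' Finset.univ_nonempty
            fun w => ∑ x, π x * M' x y * L w x :=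
          Finset.sum_le_sum fun y _ => hterm' y
end

section
/- Let X be a finite nonempty set with a metric d, and let M : X → Y → ℝ be a d-private channel. Define ℓ_bin, ℓ_nib : X → X → ℝ on action set W = X by ℓ_bin w x = (0 if w = x else 1) and ℓ_nib w x = (1 if w = x else 0). (i) If M is universally ℓ_bin-optimal within the d-privacy type, then for every finite nonempty Y' and every d-private channel M' : X → Y' → ℝ one has Σ_{y∈Y} max_{x∈X} M x y ≥ Σ_{y'∈Y'} max_{x∈X} M' x y' (M has maximal multiplicative Bayes capacity in the type). (ii) If M is universally ℓ_nib-optimal within the d-privacy type, then for every such M' one has Σ_{y∈Y} min_{x∈X} M x y ≤ Σ_{y'∈Y'} min_{x∈X} M' x y' (M has maximal additive Bayes capacity in the type). -/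
open Finset

section Helpers

variable {ι : Type} [Fintype ι] [Nonempty ι]

lemma inf'_sub_mul (c S : ℝ) (hc : 0 ≤ c) (g : ι → ℝ) :
    (univ.inf' univ_nonempty fun w => c * S - c * g w)
      = c * S - c * univ.sup' univ_nonempty g := by
  apply le_antisymm
  · obtain ⟨w0, -, hw0⟩ := Finset.exists_mem_eq_sup' (univ_nonempty (α := ι)) g
    calc (univ.inf' univ_nonempty fun w => c * S - c * g w) ≤ c * S - c * g w0 :=
          Finset.inf'_le _ (mem_univ w0)
      _ = c * S - c * univ.sup' univ_nonempty g := by rw [hw0]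
  · refine Finset.le_inf' _ _ fun w _ => ?_
    have := Finset.le_sup' g (mem_univ w)
    nlinarith
lemma inf'_mul (c : ℝ) (hc : 0 ≤ c) (g : ι → ℝ) :
    (univ.inf' univ_nonempty fun w => c * g w) = c * univ.inf' univ_nonempty g := by
  apply le_antisymm
  · obtain ⟨w0, -, hw0⟩ := Finset.exists_mem_eq_inf' (univ_nonempty (α := ι)) g
    calc (univ.inf' univ_nonempty fun w => c * g w) ≤ c * g w0 :=
          Finset.inf'_le _ (mem_univ w0)
      _ = c * univ.inf' univ_nonempty g := by rw [hw0]
  · refine Finset.le_inf' _ _ fun w _ => ?_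
    have := Finset.inf'_le g (mem_univ w)
    nlinarith

variable {X Z : Type} [Fintype X] [Nonempty X] [DecidableEq X] [Fintype Z] [Nonempty Z]

lemma bin_calc (N : X → Z → ℝ) (hN : ∀ x, ∑ z, N x z = 1) :
    postLoss (fun _ => ((Fintype.card X : ℝ)⁻¹)) N (fun w x => if w = x then (0:ℝ) else 1)
      = 1 - (Fintype.card X : ℝ)⁻¹ * ∑ z, univ.sup' univ_nonempty (fun x => N x z) := by
  set c : ℝ := (Fintype.card X : ℝ)⁻¹ with hc
  have hn : (0:ℝ) < (Fintype.card X : ℝ) := by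
    exact_mod_cast Fintype.card_pos
  have hc0 : 0 ≤ c := by positivity
  have hrow : ∀ z, (fun w => ∑ x, c * N x z * (if w = x then (0:ℝ) else 1))
      = fun w => c * (∑ x, N x z) - c * N w z := by
    intro z
    funext w
    have : ∀ x, c * N x z * (if w = x then (0:ℝ) else 1)
        = c * N x z - (if w = x then c * N x z else 0) := by
      intro x; split <;> ring
    rw [Finset.sum_congr rfl fun x _ => this x, Finset.sum_sub_distrib,
      Finset.sum_ite_eq, if_pos (mem_univ w), Finset.mul_sum]
  unfold postLoss
  have : ∀ z, (univ.inf' univ_nonempty fun w => ∑ x, c * N x z * (if w = x then (0:ℝ) else 1))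
      = c * (∑ x, N x z) - c * univ.sup' univ_nonempty (fun x => N x z) := by
    intro z
    rw [show (fun w => ∑ x, c * N x z * (if w = x then (0:ℝ) else 1)) = _ from hrow z]
    exact inf'_sub_mul c _ hc0 _
  rw [Finset.sum_congr rfl fun z _ => this z, Finset.sum_sub_distrib, ← Finset.mul_sum,
    ← Finset.mul_sum, Finset.sum_comm]
  have : ∑ x : X, ∑ z, N x z = (Fintype.card X : ℝ) := by
    rw [Finset.sum_congr rfl fun x _ => hN x, Finset.sum_const, Finset.card_univ, nsmul_eq_mul, mul_one]
  rw [this, hc, inv_mul_cancel₀ (ne_of_gt hn)]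

lemma nib_calc (N : X → Z → ℝ) :
    postLoss (fun _ => ((Fintype.card X : ℝ)⁻¹)) N (fun w x => if w = x then (1:ℝ) else 0)
      = (Fintype.card X : ℝ)⁻¹ * ∑ z, univ.inf' univ_nonempty (fun x => N x z) := by
  set c : ℝ := (Fintype.card X : ℝ)⁻¹ with hc
  have hn : (0:ℝ) < (Fintype.card X : ℝ) := by exact_mod_cast Fintype.card_pos
  have hc0 : 0 ≤ c := by positivity
  unfold postLoss
  have : ∀ z, (univ.inf' univ_nonempty fun w => ∑ x, c * N x z * (if w = x then (1:ℝ) else 0))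
      = c * univ.inf' univ_nonempty (fun x => N x z) := by
    intro z
    have hrow : (fun w => ∑ x, c * N x z * (if w = x then (1:ℝ) else 0))
        = fun w => c * N w z := by
      funext w
      have : ∀ x, c * N x z * (if w = x then (1:ℝ) else 0)
          = (if w = x then c * N x z else 0) := by intro x; split <;> ring
      rw [Finset.sum_congr rfl fun x _ => this x, Finset.sum_ite_eq, if_pos (mem_univ w)]
    rw [hrow]
    exact inf'_mul c hc0 _
  rw [Finset.sum_congr rfl fun z _ => this z, ← Finset.mul_sum]

lemma uniform_prior : IsPrior (fun _ : X => ((Fintype.card X : ℝ)⁻¹)) := by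
  have hn : (0:ℝ) < (Fintype.card X : ℝ) := by exact_mod_cast Fintype.card_pos
  constructor
  · intro x; positivity
  · rw [Finset.sum_const, Finset.card_univ, nsmul_eq_mul, mul_inv_cancel₀ (ne_of_gt hn)]

end Helpers

/-- Universal optimal capacity: (i) a universally `ℓ_bin`-optimal mechanism
has maximal multiplicative Bayes capacity in its privacy type; (ii) a
universally `ℓ_nib`-optimal mechanism has maximal additive Bayes capacity. -/
theorem universally_optimal_capacity
    {X Y : Type} [Fintype X] [Nonempty X] [DecidableEq X]
    [Fintype Y] [Nonempty Y]
    (d : X → X → ℝ) (hd : IsMetric d)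
    (M : X → Y → ℝ) (hM : IsChannel M) (hMp : IsPrivate d M) :
    (UnivOptimal d M (fun (w x : X) => if w = x then (0 : ℝ) else 1) →
      ∀ (Y' : Type) (_ : Fintype Y') (_ : Nonempty Y') (M' : X → Y' → ℝ),
        IsChannel M' → IsPrivate d M' →
          (∑ y', Finset.univ.sup' Finset.univ_nonempty fun x => M' x y')
            ≤ ∑ y, Finset.univ.sup' Finset.univ_nonempty fun x => M x y) ∧
    (UnivOptimal d M (fun (w x : X) => if w = x then (1 : ℝ) else 0) →
      ∀ (Y' : Type) (_ : Fintype Y') (_ : Nonempty Y') (M' : X → Y' → ℝ),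
        IsChannel M' → IsPrivate d M' →
          (∑ y, Finset.univ.inf' Finset.univ_nonempty fun x => M x y)
            ≤ ∑ y', Finset.univ.inf' Finset.univ_nonempty fun x => M' x y') := by
  
  have hn : (0:ℝ) < (Fintype.card X : ℝ) := by exact_mod_cast Fintype.card_pos
  have hc0 : (0:ℝ) < (Fintype.card X : ℝ)⁻¹ := by positivity
  constructor
  · intro hopt Y' fY' nY' M' hM' hM'p
    letI := fY'; letI := nY'
    have h := hopt Y' M' hM' hM'p (fun _ => ((Fintype.card X : ℝ)⁻¹)) uniform_prior
    rw [bin_calc M hM.2, bin_calc M' hM'.2] at h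
    have h2 : (Fintype.card X : ℝ)⁻¹ * ∑ y' : Y', univ.sup' univ_nonempty (fun x => M' x y')
        ≤ (Fintype.card X : ℝ)⁻¹ * ∑ y : Y, univ.sup' univ_nonempty (fun x => M x y) := by
      linarith
    exact (mul_le_mul_iff_right₀ hc0).mp h2
  · intro hopt Y' fY' nY' M' hM' hM'p
    letI := fY'; letI := nY'
    have h := hopt Y' M' hM' hM'p (fun _ => ((Fintype.card X : ℝ)⁻¹)) uniform_prior
    rw [nib_calc M, nib_calc M'] at h
    exact (mul_le_mul_iff_right₀ hc0).mp h
end
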